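/- Let K ≥ 2, σ : [K] → ℝ positive, a* ∈ [K], and let w be a point of the open simplex that equalizes σ(a*)²/w(a*) + σ(a)²/w(a) = C across all a ≠ a* and satisfies w(a*) = √(σ(a*)² Σ_{a≠a*} w(a)²/σ(a)²). Then w(a) = σ(a)²/(S(σ(a*)+S)) for a ≠ a*, w(a*) = σ(a*)/(σ(a*)+S), and C = (σ(a*)+S)², where S = √(Σ_{b≠a*} σ(b)²). -/

import Mathlib

open Finset

/-- KKT characterization of the generalized Neyman allocation: an allocation in the
open simplex equalizing `σ(a*)²/w(a*) + σ(a)²/w(a) = C` across `a ≠ a*` and satisfying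
`w(a*) = √(σ(a*)² Σ_{a≠a*} w(a)²/σ(a)²)` is the generalized Neyman allocation. -/
theorem kkt_characterization (K : ℕ) (hK : 2 ≤ K) (σ : Fin K → ℝ) (hσ : ∀ a, 0 < σ a)
    (astar : Fin K) (w : Fin K → ℝ) (hw : ∀ a, 0 < w a) (hsum : (∑ a, w a) = 1)
    (C : ℝ)
    (hC : ∀ a, a ≠ astar → σ astar ^ 2 / w astar + σ a ^ 2 / w a = C)
    (hbal : w astar =
      Real.sqrt (σ astar ^ 2 * ∑ a ∈ univ.erase astar, w a ^ 2 / σ a ^ 2)) :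
    let S : ℝ := Real.sqrt (∑ b ∈ univ.erase astar, σ b ^ 2)
    (∀ a, a ≠ astar → w a = σ a ^ 2 / (S * (σ astar + S))) ∧
      w astar = σ astar / (σ astar + S) ∧ C = (σ astar + S) ^ 2 := by
  intro S
  have hcard : 1 < Fintype.card (Fin K) := by rw [Fintype.card_fin]; omega
  obtain ⟨a0, ha0⟩ := Fintype.exists_ne_of_one_lt_card hcard astar
  set D : ℝ := σ a0 ^ 2 / w a0 with hDdef
  have hDpos : 0 < D := div_pos (pow_pos (hσ a0) 2) (hw a0)
  have hD : ∀ a, a ≠ astar → σ a ^ 2 / w a = D := by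
    intro a ha
    have h1 := hC a ha
    have h2 := hC a0 ha0
    rw [hDdef]; linarith
  have hwa : ∀ a, a ≠ astar → w a = σ a ^ 2 / D := by
    intro a ha
    have h := hD a ha
    rw [div_eq_iff (hw a).ne'] at h
    rw [eq_div_iff hDpos.ne']
    linarith
  set Q : ℝ := ∑ b ∈ univ.erase astar, σ b ^ 2 with hQdef
  have ha0mem : a0 ∈ univ.erase astar := by simp [ha0]
  have hQpos : 0 < Q :=
    Finset.sum_pos (fun b _ => pow_pos (hσ b) 2) ⟨a0, ha0mem⟩
  have hSpos : 0 < S := Real.sqrt_pos.mpr hQpos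
  have hS2 : S ^ 2 = Q := Real.sq_sqrt hQpos.le
  -- sum constraint
  have hsum' : w astar + Q / D = 1 := by
    have h1 : w astar + ∑ a ∈ univ.erase astar, w a = 1 := by
      rw [Finset.add_sum_erase univ w (mem_univ astar)]; exact hsum
    have h2 : ∑ a ∈ univ.erase astar, w a = Q / D := by
      rw [hQdef, Finset.sum_div]
      exact Finset.sum_congr rfl fun a ha => hwa a (Finset.ne_of_mem_erase ha)
    linarith [h2 ▸ h1]
  -- balance constraint
  have hbal' : w astar = σ astar * S / D := by
    have h2 : ∑ a ∈ univ.erase astar, w a ^ 2 / σ a ^ 2 = Q / D ^ 2 := by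
      rw [hQdef, Finset.sum_div]
      refine Finset.sum_congr rfl fun a ha => ?_
      rw [hwa a (Finset.ne_of_mem_erase ha)]
      have hσa : (σ a : ℝ) ^ 2 ≠ 0 := (pow_pos (hσ a) 2).ne'
      field_simp
    rw [hbal, h2]
    have : σ astar ^ 2 * (Q / D ^ 2) = (σ astar * S / D) ^ 2 := by
      rw [← hS2]; field_simp
    rw [this, Real.sqrt_sq]
    exact le_of_lt (div_pos (mul_pos (hσ astar) hSpos) hDpos)
  -- solve
  have hDval : D = S * (σ astar + S) := by
    have h1 : w astar * D = σ astar * S := by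
      rw [hbal']; field_simp
    have h2 : w astar * D + Q = D := by
      have := hsum'
      field_simp at this
      linarith
    rw [← hS2] at h2
    nlinarith
  have hSne : (σ astar + S) ≠ 0 := (add_pos (hσ astar) hSpos).ne'
  have hwstar : w astar = σ astar / (σ astar + S) := by
    rw [hbal', hDval]
    field_simp
  refine ⟨fun a ha => by rw [hwa a ha, hDval], hwstar, ?_⟩
  have hC0 := hC a0 ha0
  rw [← hDdef, hwstar, hDval] at hC0
  have hσs : (0:ℝ) < σ astar := hσ astar
  field_simp at hC0
  nlinarith [hC0]
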